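/- Let B : ℕ → ℕ → ℝ be defined by B(n,0) = α^n, B(0,m) = β^m, and B(n,m) = αβ(B(n,m-1) + B(n-1,m)) for n,m ≥ 1. If α+β ≠ 1, α ≠ 0, β ≠ 0, then for every n the matrix (B(i,j))_{0 ≤ i,j ≤ n} is invertible. -/

import Mathlib

open Matrix Finset

/-- The generalized bi-moment family with inhomogeneity `c`. -/
noncomputable def Bgen (a b c : ℝ) : ℕ → ℕ → ℝ
  | n, 0 => a ^ n
  | 0, m + 1 => b ^ (m + 1)
  | n + 1, m + 1 => a * b * (Bgen a b c (n + 1) m + Bgen a b c n (m + 1))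
      + c * a ^ (n + 1) * b ^ (m + 1)
termination_by n m => n + m

lemma Bgen_zero_right (a b c : ℝ) (n : ℕ) : Bgen a b c n 0 = a ^ n := by
  cases n <;> simp [Bgen]

lemma Bgen_zero_left (a b c : ℝ) (m : ℕ) : Bgen a b c 0 m = b ^ m := by
  cases m <;> simp [Bgen]

lemma Bgen_succ (a b c : ℝ) (n m : ℕ) :
    Bgen a b c (n + 1) (m + 1) = a * b * (Bgen a b c (n + 1) m + Bgen a b c n (m + 1))
      + c * a ^ (n + 1) * b ^ (m + 1) := by
  rw [Bgen]

/-- Key identity linking the `c = 0` and `c = (1-a)(1-b)` members of the family. -/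
lemma Bgen_key (a b : ℝ) : ∀ n m : ℕ,
    (a * b) ^ 2 * Bgen a b 0 n m
      = a * b * (a + b - 1) * Bgen a b ((1 - a) * (1 - b)) n m
        + (1 - a) * (1 - b) * a ^ (n + 1) * b ^ (m + 1) := by
  intro n
  induction n with
  | zero =>
    intro m
    rw [Bgen_zero_left, Bgen_zero_left]
    ring
  | succ n ih =>
    intro m
    induction m with
    | zero =>
      rw [Bgen_zero_right, Bgen_zero_right]
      ring
    | succ m ihm =>
      rw [Bgen_succ, Bgen_succ]
      linear_combination (a * b) * ihm + (a * b) * ih (m + 1)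

/-- Generic one-step size reduction for the determinant, via row/column elimination. -/
lemma det_step (n : ℕ) (f g : ℕ → ℕ → ℝ) (r lam : ℝ) (w : ℕ → ℝ) (hw0 : w 0 = 0)
    (h00 : f 0 0 = 1)
    (hrow : ∀ j, f 0 (j + 1) - r * f 0 j - f 0 0 * w (j + 1) = 0)
    (hmain : ∀ i j, (f (i + 1) (j + 1) - r * f i (j + 1)) - r * (f (i + 1) j - r * f i j)
        - (f (i + 1) 0 - r * f i 0) * w (j + 1) = lam * g i j) :
    (Matrix.of fun i j : Fin (n + 2) => f i j).det
      = lam ^ (n + 1) * (Matrix.of fun i j : Fin (n + 1) => g i j).det := by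
  set A : Matrix (Fin (n + 2)) (Fin (n + 2)) ℝ := Matrix.of fun i j => f i j with hA
  set S : Matrix (Fin (n + 2)) (Fin (n + 2)) ℝ :=
    Matrix.of fun i j => if (j : ℕ) + 1 = (i : ℕ) then (1 : ℝ) else 0 with hS
  set P : Matrix (Fin (n + 2)) (Fin (n + 2)) ℝ :=
    Matrix.of fun i j => (if (i : ℕ) = 0 then (1 : ℝ) else 0) * w (j : ℕ) with hP
  -- entry lemmas for products
  have hSA0 : ∀ (M : Matrix (Fin (n + 2)) (Fin (n + 2)) ℝ) j, (S * M) 0 j = 0 := by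
    intro M j
    rw [Matrix.mul_apply]
    refine Finset.sum_eq_zero fun k _ => ?_
    have : ((k : ℕ) + 1 = ((0 : Fin (n + 2)) : ℕ)) = False := by simp
    simp [hS, this]
  have hSAs : ∀ (M : Matrix (Fin (n + 2)) (Fin (n + 2)) ℝ) (i : Fin (n + 1)) j,
      (S * M) i.succ j = M i.castSucc j := by
    intro M i j
    rw [Matrix.mul_apply]
    rw [Finset.sum_eq_single i.castSucc]
    · simp [hS]
    · intro k _ hk
      have : (k : ℕ) ≠ (i : ℕ) := fun h => hk (Fin.ext (by simpa using h))
      simp [hS, this]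
    · simp
  have hMS0 : ∀ (M : Matrix (Fin (n + 2)) (Fin (n + 2)) ℝ) i, (M * Sᵀ) i 0 = 0 := by
    intro M i
    rw [Matrix.mul_apply]
    refine Finset.sum_eq_zero fun k _ => ?_
    have : ((k : ℕ) + 1 = ((0 : Fin (n + 2)) : ℕ)) = False := by simp
    simp [hS, Matrix.transpose_apply, this]
  have hMSs : ∀ (M : Matrix (Fin (n + 2)) (Fin (n + 2)) ℝ) i (j : Fin (n + 1)),
      (M * Sᵀ) i j.succ = M i j.castSucc := by
    intro M i j
    rw [Matrix.mul_apply]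
    rw [Finset.sum_eq_single j.castSucc]
    · simp [hS]
    · intro k _ hk
      have : (k : ℕ) ≠ (j : ℕ) := fun h => hk (Fin.ext (by simpa using h))
      simp [hS, this]
    · simp
  have hMP : ∀ (M : Matrix (Fin (n + 2)) (Fin (n + 2)) ℝ) i j,
      (M * P) i j = M i 0 * w (j : ℕ) := by
    intro M i j
    rw [Matrix.mul_apply]
    rw [Finset.sum_eq_single (0 : Fin (n + 2))]
    · simp [hP]
    · intro k _ hk
      have : ¬ ((k : ℕ) = 0) := by
        intro h; exact hk (Fin.ext (by simpa using h))
      simp [hP, this, hk]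
    · simp
  set A1 : Matrix (Fin (n + 2)) (Fin (n + 2)) ℝ := A - r • (S * A) with hA1
  set A2 : Matrix (Fin (n + 2)) (Fin (n + 2)) ℝ := A1 - r • (A1 * Sᵀ) with hA2
  set A3 : Matrix (Fin (n + 2)) (Fin (n + 2)) ℝ := A2 - A2 * P with hA3
  -- entry values
  have hA1_0 : ∀ j, A1 0 j = f 0 (j : ℕ) := by
    intro j; simp [hA1, hSA0, hA]
  have hA1_s : ∀ (i : Fin (n + 1)) j, A1 i.succ j = f ((i : ℕ) + 1) (j : ℕ) - r * f i (j : ℕ) := by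
    intro i j; simp [hA1, hSAs, hA]
  have hA2_0c : ∀ i, A2 i 0 = A1 i 0 := by
    intro i; simp [hA2, hMS0]
  have hA2_sc : ∀ i (j : Fin (n + 1)), A2 i j.succ = A1 i j.succ - r * A1 i j.castSucc := by
    intro i j; simp [hA2, hMSs]
  have hA3e : ∀ i j, A3 i j = A2 i j - A2 i 0 * w (j : ℕ) := by
    intro i j; simp [hA3, hMP]
  have h3_00 : A3 0 0 = 1 := by
    rw [hA3e, hA2_0c, hA1_0]
    simp [hw0, h00]
  have h3_0s : ∀ (j : Fin (n + 1)), A3 0 j.succ = 0 := by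
    intro j
    rw [hA3e, hA2_sc, hA2_0c, hA1_0, hA1_0, hA1_0]
    have := hrow (j : ℕ)
    simpa using this
  have h3_ss : ∀ (i j : Fin (n + 1)), A3 i.succ j.succ = lam * g (i : ℕ) (j : ℕ) := by
    intro i j
    rw [hA3e, hA2_sc, hA2_0c, hA1_s, hA1_s, hA1_s]
    have := hmain (i : ℕ) (j : ℕ)
    simpa using this
  -- determinant of A3 equals determinant of A
  have hdetA3 : A3.det = A.det := by
    have e1 : A1 = (1 - r • S) * A := by
      rw [hA1, sub_mul, one_mul, Matrix.smul_mul]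
    have e2 : A2 = A1 * (1 - r • Sᵀ) := by
      rw [hA2, mul_sub, mul_one, Matrix.mul_smul]
    have e3 : A3 = A2 * (1 - P) := by
      rw [hA3, mul_sub, mul_one]
    have dL : (1 - r • S).det = 1 := by
      rw [Matrix.det_of_lowerTriangular (1 - r • S)
        (by
          intro i j hij
          have hij' : i < j := hij
          have h2 : ¬ ((j : ℕ) + 1 = (i : ℕ)) := by
            have := Fin.lt_iff_val_lt_val.mp hij'
            omega
          simp [Matrix.one_apply_ne (Fin.ne_of_lt hij'), hS, h2])]
      have : ∀ i : Fin (n + 2), (1 - r • S) i i = 1 := by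
        intro i
        have : ¬ ((i : ℕ) + 1 = (i : ℕ)) := by omega
        simp [hS, Matrix.one_apply, this]
      simp [this]
    have dU : (1 - r • Sᵀ).det = 1 := by
      rw [Matrix.det_of_upperTriangular
        (by
          intro i j hij
          have hij' : j < i := hij
          have h2 : ¬ ((i : ℕ) + 1 = (j : ℕ)) := by
            have := Fin.lt_iff_val_lt_val.mp hij'
            omega
          simp [Matrix.one_apply_ne (Fin.ne_of_gt hij'), hS, Matrix.transpose_apply, h2])]
      have : ∀ i : Fin (n + 2), (1 - r • Sᵀ) i i = 1 := by
        intro i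
        have : ¬ ((i : ℕ) + 1 = (i : ℕ)) := by omega
        simp [hS, Matrix.one_apply, Matrix.transpose_apply, this]
      simp [this]
    have dP : (1 - P).det = 1 := by
      rw [Matrix.det_of_upperTriangular
        (by
          intro i j hij
          have hij' : j < i := hij
          have h2 : ¬ ((i : ℕ) = 0) := by
            have := Fin.lt_iff_val_lt_val.mp hij'
            omega
          simp [Matrix.one_apply_ne (Fin.ne_of_gt hij'), hP, h2,
            (show i ≠ 0 from fun h => h2 (by simp [h]))])]
      have : ∀ i : Fin (n + 2), (1 - P) i i = 1 := by
        intro i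
        rcases Nat.eq_zero_or_pos (i : ℕ) with h | h
        · simp [hP, Matrix.one_apply, h, hw0]
        · have : ¬ ((i : ℕ) = 0) := by omega
          simp [hP, Matrix.one_apply, this, (show i ≠ 0 from fun h' => this (by simp [h']))]
      simp [this]
    rw [e3, Matrix.det_mul, e2, Matrix.det_mul, e1, Matrix.det_mul, dL, dU, dP]
    ring
  -- expand det A3 along the first row
  rw [← hdetA3]
  rw [Matrix.det_succ_row_zero]
  rw [Fin.sum_univ_succ]
  have hz : ∀ j : Fin (n + 1),
      (-1 : ℝ) ^ ((j.succ : Fin (n+2)) : ℕ) * A3 0 j.succ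
        * (A3.submatrix Fin.succ (j.succ).succAbove).det = 0 := by
    intro j
    rw [h3_0s]
    ring
  rw [Finset.sum_eq_zero fun j _ => hz j]
  rw [h3_00]
  have hsub : A3.submatrix Fin.succ (Fin.succAbove 0)
      = lam • (Matrix.of fun i j : Fin (n + 1) => g i j) := by
    ext i j
    rw [Fin.succAbove_zero]
    simp [Matrix.submatrix_apply, h3_ss i j]
  rw [hsub, Matrix.det_smul]
  simp

theorem stmt_3 (α β : ℝ) (hα : α ≠ 0) (hβ : β ≠ 0) (hsum : α + β ≠ 1)
    (B : ℕ → ℕ → ℝ)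
    (hB1 : ∀ n, B n 0 = α ^ n) (hB2 : ∀ m, B 0 m = β ^ m)
    (hB3 : ∀ n m, B (n + 1) (m + 1) = α * β * (B (n + 1) m + B n (m + 1))) :
    ∀ n : ℕ, IsUnit (Matrix.of fun i j : Fin (n + 1) => B i j) := by
  have hs : α + β - 1 ≠ 0 := sub_ne_zero.mpr hsum
  have hab : α * β ≠ 0 := mul_ne_zero hα hβ
  set K : ℝ := (1 - α) * (1 - β) with hK
  set w : ℕ → ℝ := fun j => if j = 0 then 0 else (1 - α) * β ^ j with hwdef
  have hw0 : w 0 = 0 := by simp [hwdef]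
  have hws : ∀ j : ℕ, w (j + 1) = (1 - α) * β ^ (j + 1) := by
    intro j; simp [hwdef]
  -- common hypotheses of det_step for any c
  have h00 : ∀ c : ℝ, Bgen α β c 0 0 = 1 := by
    intro c; rw [Bgen_zero_right]; simp
  have hrow : ∀ c : ℝ, ∀ j, Bgen α β c 0 (j + 1) - (α * β) * Bgen α β c 0 j
      - Bgen α β c 0 0 * w (j + 1) = 0 := by
    intro c j
    rw [Bgen_zero_left, Bgen_zero_left, Bgen_zero_left, hws]
    ring
  -- main hypothesis for c = K (self-reproducing)
  have hmainK : ∀ i j, (Bgen α β K (i + 1) (j + 1) - (α * β) * Bgen α β K i (j + 1))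
      - (α * β) * (Bgen α β K (i + 1) j - (α * β) * Bgen α β K i j)
      - (Bgen α β K (i + 1) 0 - (α * β) * Bgen α β K i 0) * w (j + 1)
      = ((α * β) ^ 2) * Bgen α β K i j := by
    intro i j
    rw [Bgen_succ, Bgen_zero_right, Bgen_zero_right, hws, hK]
    ring
  -- main hypothesis for c = 0 (reduces to the K family)
  have hmain0 : ∀ i j, (Bgen α β 0 (i + 1) (j + 1) - (α * β) * Bgen α β 0 i (j + 1))
      - (α * β) * (Bgen α β 0 (i + 1) j - (α * β) * Bgen α β 0 i j)
      - (Bgen α β 0 (i + 1) 0 - (α * β) * Bgen α β 0 i 0) * w (j + 1)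
      = (α * β * (α + β - 1)) * Bgen α β K i j := by
    intro i j
    rw [Bgen_succ, Bgen_zero_right, Bgen_zero_right, hws, hK]
    linear_combination Bgen_key α β i j
  -- the K family has nonvanishing determinants
  have hdetK : ∀ n : ℕ, (Matrix.of fun i j : Fin (n + 1) => Bgen α β K i j).det ≠ 0 := by
    intro n
    induction n with
    | zero =>
      rw [Matrix.det_fin_one]
      simp [Bgen_zero_right]
    | succ n ih =>
      rw [det_step n (Bgen α β K) (Bgen α β K) (α * β) ((α * β) ^ 2) w hw0 (h00 K)
        (hrow K) hmainK]
      exact mul_ne_zero (pow_ne_zero _ (pow_ne_zero _ hab)) ih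
  -- B coincides with Bgen α β 0
  have huniq : ∀ n m : ℕ, B n m = Bgen α β 0 n m := by
    intro n
    induction n with
    | zero =>
      intro m
      rw [hB2, Bgen_zero_left]
    | succ n ih =>
      intro m
      induction m with
      | zero => rw [hB1, Bgen_zero_right]
      | succ m ihm =>
        rw [hB3, Bgen_succ, ihm, ih (m + 1)]
        ring
  intro n
  have hM : (Matrix.of fun i j : Fin (n + 1) => B i j)
      = Matrix.of fun i j : Fin (n + 1) => Bgen α β 0 i j := by
    ext i j
    simp [huniq]
  rw [hM, Matrix.isUnit_iff_isUnit_det, isUnit_iff_ne_zero]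
  cases n with
  | zero =>
    rw [Matrix.det_fin_one]
    simp [Bgen_zero_right]
  | succ n =>
    rw [det_step n (Bgen α β 0) (Bgen α β K) (α * β) (α * β * (α + β - 1)) w hw0 (h00 0)
      (hrow 0) hmain0]
    exact mul_ne_zero (pow_ne_zero _ (mul_ne_zero hab hs)) (hdetK n)
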